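/- Let R be a finite commutative local principal ring. An element x ∈ H(R) is a product of finitely many (r ≥ 1) idempotents if and only if x is a product of two idempotents. -/

import Mathlib

set_option linter.unusedSectionVars false
set_option linter.unusedVariables false
set_option linter.unreachableTactic false
set_option linter.unusedTactic false
set_option linter.unnecessarySeqFocus false
set_option maxHeartbeats 1000000

open Quaternion Matrix

section Aux

lemma local_idem {R : Type*} [CommRing R] [IsLocalRing R] {e : R} (h : IsIdempotentElem e) :
    e = 0 ∨ e = 1 := by
  have he : e * e = e := h
  rcases IsLocalRing.isUnit_or_isUnit_of_add_one (a := e) (b := 1 - e) (by ring) with hu | hu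
  · right; exact hu.mul_left_cancel (by rw [he, mul_one])
  · left; exact hu.mul_left_cancel (show (1-e)*e = (1-e)*0 by linear_combination -he)

variable {R : Type*} [CommRing R] [IsLocalRing R]

lemma vecMulVec_fin_two (x y : Fin 2 → R) :
    vecMulVec x y = !![x 0 * y 0, x 0 * y 1; x 1 * y 0, x 1 * y 1] := by
  ext i j
  fin_cases i <;> fin_cases j <;> simp [vecMulVec_apply]

lemma vecMulVec_mul_vecMulVec (x y x' y' : Fin 2 → R) :
    vecMulVec x y * vecMulVec x' y' = (y ⬝ᵥ x') • vecMulVec x y' := by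
  ext i j
  simp [Matrix.mul_apply, vecMulVec_apply, dotProduct, Fin.sum_univ_two]
  ring

lemma isIdem_vecMulVec (x y : Fin 2 → R) (h : y ⬝ᵥ x = 1) :
    IsIdempotentElem (vecMulVec x y) := by
  unfold IsIdempotentElem
  rw [_root_.vecMulVec_mul_vecMulVec, h, one_smul]

lemma idem_classify (E : Matrix (Fin 2) (Fin 2) R) (hE : IsIdempotentElem E) :
    E = 0 ∨ E = 1 ∨ ∃ x y : Fin 2 → R, y ⬝ᵥ x = 1 ∧ E = vecMulVec x y := by
  have hdet : IsIdempotentElem (E.det) := by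
    unfold IsIdempotentElem; rw [← Matrix.det_mul, hE]
  rcases local_idem hdet with hd | hd
  · obtain ⟨a, b, c, d, rfl⟩ : ∃ a b c d, E = !![a,b;c,d] := ⟨_,_,_,_, Matrix.eta_fin_two E⟩
    rw [Matrix.det_fin_two_of] at hd
    have hbc : b * c = a * d := by linear_combination -hd
    have e11 : a * a + b * c = a := by
      have := congrFun (congrFun hE 0) 0
      simpa [Matrix.mul_apply, Fin.sum_univ_two] using this
    have e12 : a * b + b * d = b := by
      have := congrFun (congrFun hE 0) 1
      simpa [Matrix.mul_apply, Fin.sum_univ_two] using this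
    have e21 : c * a + d * c = c := by
      have := congrFun (congrFun hE 1) 0
      simpa [Matrix.mul_apply, Fin.sum_univ_two, mul_comm] using this
    have e22 : c * b + d * d = d := by
      have := congrFun (congrFun hE 1) 1
      simpa [Matrix.mul_apply, Fin.sum_univ_two] using this
    have ht : IsIdempotentElem (a + d) := by
      show (a+d)*(a+d) = a+d
      linear_combination e11 + e22 - 2*hbc
    rcases local_idem ht with h0 | h1
    · left
      have haz : a = 0 := by linear_combination -e11 + hbc + a * h0
      have hdz : d = 0 := by linear_combination -e22 + hbc + d * h0
      have hbz : b = 0 := by linear_combination -e12 + b * h0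
      have hcz : c = 0 := by linear_combination -e21 + c * h0
      rw [haz, hbz, hcz, hdz]
      ext i j
      fin_cases i <;> fin_cases j <;> simp
    · right; right
      rcases IsLocalRing.isUnit_or_isUnit_of_add_one h1 with hu | hu
      · obtain ⟨u, rfl⟩ := hu
        have key : (↑u⁻¹ : R) * ↑u = 1 := u.inv_mul
        refine ⟨![↑u, c], ![1, ↑u⁻¹ * b], ?_, ?_⟩
        · simp only [dotProduct, Fin.sum_univ_two, Matrix.cons_val_zero, Matrix.cons_val_one,
            Matrix.head_cons]
          linear_combination (↑u⁻¹:R)*hbc + d*key + h1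
        · rw [vecMulVec_fin_two]
          simp only [Matrix.cons_val_zero, Matrix.cons_val_one, Matrix.head_cons]
          have h2 : (↑u:R) * (↑u⁻¹ * b) = b := by linear_combination b*key
          have h4 : c * ((↑u⁻¹:R) * b) = d := by linear_combination (↑u⁻¹:R)*hbc + d*key
          rw [h2, h4, mul_one, mul_one]
      · obtain ⟨u, rfl⟩ := hu
        have key : (↑u⁻¹ : R) * ↑u = 1 := u.inv_mul
        refine ⟨![b, ↑u], ![↑u⁻¹ * c, 1], ?_, ?_⟩
        · simp only [dotProduct, Fin.sum_univ_two, Matrix.cons_val_zero, Matrix.cons_val_one,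
            Matrix.head_cons]
          linear_combination (↑u⁻¹:R)*hbc + a*key + h1
        · rw [vecMulVec_fin_two]
          simp only [Matrix.cons_val_zero, Matrix.cons_val_one, Matrix.head_cons]
          have h1' : b * ((↑u⁻¹:R) * c) = a := by linear_combination (↑u⁻¹:R)*hbc + a*key
          have h3 : (↑u:R) * (↑u⁻¹ * c) = c := by linear_combination c*key
          rw [h1', h3, mul_one, mul_one]
  · right; left
    have hUnit : IsUnit E := (Matrix.isUnit_iff_isUnit_det E).mpr (by rw [hd]; exact isUnit_one)
    exact hUnit.mul_left_cancel (by rw [hE, mul_one])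

lemma nonunit_sum {a b x0 x1 : R} (h : a * x0 + b * x1 = 1) :
    IsUnit x0 ∨ IsUnit x1 := by
  by_contra hc
  push_neg at hc
  obtain ⟨h0, h1⟩ := hc
  have : a * x0 + b * x1 ∈ nonunits R := by
    apply IsLocalRing.nonunits_add
    · intro hu; exact h0 (isUnit_of_mul_isUnit_right hu)
    · intro hu; exact h1 (isUnit_of_mul_isUnit_right hu)
  rw [h] at this
  exact this isUnit_one

lemma dual_exists (x0 x1 y0 y1 c : R) (hx : IsUnit x0 ∨ IsUnit x1) (hy : IsUnit y0 ∨ IsUnit y1) :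
    ∃ a0 a1 b0 b1 : R, a0*x0 + a1*x1 = 1 ∧ y0*b0 + y1*b1 = 1 ∧ a0*b0 + a1*b1 = c := by
  -- case A : x0, y1 units
  have caseA : ∀ (x0 x1 y0 y1 c : R), IsUnit x0 → IsUnit y1 →
      ∃ a0 a1 b0 b1 : R, a0*x0 + a1*x1 = 1 ∧ y0*b0 + y1*b1 = 1 ∧ a0*b0 + a1*b1 = c := by
    intro x0 x1 y0 y1 c hx0 hy1
    obtain ⟨u, rfl⟩ := hx0
    obtain ⟨v, rfl⟩ := hy1
    exact ⟨↑u⁻¹, 0, c*↑u, ↑v⁻¹*(1 - y0*(c*↑u)),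
      by linear_combination u.inv_mul,
      by linear_combination (1 - y0*(c*↑u)) * v.mul_inv,
      by linear_combination c * u.inv_mul⟩
  -- case B : x1, y0 units (mirror of A)
  have caseB : ∀ (x0 x1 y0 y1 c : R), IsUnit x1 → IsUnit y0 →
      ∃ a0 a1 b0 b1 : R, a0*x0 + a1*x1 = 1 ∧ y0*b0 + y1*b1 = 1 ∧ a0*b0 + a1*b1 = c := by
    intro x0 x1 y0 y1 c hx1 hy0
    obtain ⟨a0, a1, b0, b1, h1, h2, h3⟩ := caseA x1 x0 y1 y0 c hx1 hy0
    exact ⟨a1, a0, b1, b0, by linear_combination h1, by linear_combination h2,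
      by linear_combination h3⟩
  -- case C : x0, y0 units, x1 y1 nonunits
  have caseC : ∀ (x0 x1 y0 y1 c : R), IsUnit x0 → IsUnit y0 → ¬IsUnit x1 →
      ∃ a0 a1 b0 b1 : R, a0*x0 + a1*x1 = 1 ∧ y0*b0 + y1*b1 = 1 ∧ a0*b0 + a1*b1 = c := by
    intro x0 x1 y0 y1 c hx0 hy0 hx1
    obtain ⟨u, rfl⟩ := hx0
    obtain ⟨v, rfl⟩ := hy0
    have hW : IsUnit (1 - x1*(↑u⁻¹*↑v⁻¹*(1-y1))) := by
      apply IsLocalRing.isUnit_one_sub_self_of_mem_nonunits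
      intro hu
      exact hx1 (isUnit_of_mul_isUnit_left hu)
    obtain ⟨w, hw⟩ := hW
    have h3 : (↑w⁻¹:R) * ↑w = 1 := w.inv_mul
    set a1 : R := ↑w⁻¹*(c - ↑u⁻¹*↑v⁻¹*(1-y1)) with ha1
    refine ⟨↑u⁻¹*(1 - x1*a1), a1, ↑v⁻¹*(1-y1), 1, ?_, ?_, ?_⟩
    · linear_combination (1 - x1*a1) * u.inv_mul
    · linear_combination (1-y1) * v.mul_inv
    · linear_combination (c - ↑u⁻¹*↑v⁻¹*(1-y1)) * h3 + (↑w:R) * ha1 - a1 * hw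
  rcases hx with hx0 | hx1 <;> rcases hy with hy0 | hy1
  · by_cases hx1 : IsUnit x1
    · exact caseB _ _ _ _ _ hx1 hy0
    · exact caseC _ _ _ _ _ hx0 hy0 hx1
  · exact caseA _ _ _ _ _ hx0 hy1
  · exact caseB _ _ _ _ _ hx1 hy0
  · by_cases hx0 : IsUnit x0
    · exact caseA _ _ _ _ _ hx0 hy1
    · obtain ⟨a0, a1, b0, b1, h1, h2, h3⟩ := caseC x1 x0 y1 y0 c hx1 hy1 hx0
      exact ⟨a1, a0, b1, b0, by linear_combination h1, by linear_combination h2,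
        by linear_combination h3⟩

lemma two_idem_of_smul (x y : Fin 2 → R) (hx : IsUnit (x 0) ∨ IsUnit (x 1))
    (hy : IsUnit (y 0) ∨ IsUnit (y 1)) (c : R) :
    ∃ F G : Matrix (Fin 2) (Fin 2) R, IsIdempotentElem F ∧ IsIdempotentElem G ∧
      c • vecMulVec x y = F * G := by
  obtain ⟨a0, a1, b0, b1, h1, h2, h3⟩ := dual_exists (x 0) (x 1) (y 0) (y 1) c hx hy
  refine ⟨vecMulVec x ![a0, a1], vecMulVec ![b0, b1] y,
    isIdem_vecMulVec _ _ ?_, isIdem_vecMulVec _ _ ?_, ?_⟩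
  · simp only [dotProduct, Fin.sum_univ_two, Matrix.cons_val_zero, Matrix.cons_val_one,
      Matrix.head_cons]
    linear_combination h1
  · simp only [dotProduct, Fin.sum_univ_two, Matrix.cons_val_zero, Matrix.cons_val_one,
      Matrix.head_cons]
    linear_combination h2
  · rw [_root_.vecMulVec_mul_vecMulVec]
    congr 1
    simp only [dotProduct, Fin.sum_univ_two, Matrix.cons_val_zero, Matrix.cons_val_one,
      Matrix.head_cons]
    linear_combination -h3

lemma m2_prod_aux (l : List (Matrix (Fin 2) (Fin 2) R)) (hl : ∀ e ∈ l, IsIdempotentElem e) :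
    l.prod = 1 ∨ l.prod = 0 ∨ ∃ (c : R) (x y : Fin 2 → R),
      (IsUnit (x 0) ∨ IsUnit (x 1)) ∧ (IsUnit (y 0) ∨ IsUnit (y 1)) ∧
      l.prod = c • vecMulVec x y := by
  induction l with
  | nil => left; rfl
  | cons e t ih =>
    have he : IsIdempotentElem e := hl e (List.mem_cons_self (a := e) (l := t))
    have ht : ∀ e ∈ t, IsIdempotentElem e := fun f hf => hl f (List.mem_cons_of_mem e hf)
    rw [List.prod_cons]
    rcases idem_classify e he with rfl | rfl | ⟨x', y', hyx, rfl⟩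
    · right; left; rw [zero_mul]
    · rcases ih ht with h | h | h
      · left; rw [one_mul, h]
      · right; left; rw [one_mul, h]
      · right; right; rw [one_mul]; exact h
    · have hx' : IsUnit (x' 0) ∨ IsUnit (x' 1) := by
        apply nonunit_sum (a := y' 0) (b := y' 1)
        simpa [dotProduct, Fin.sum_univ_two] using hyx
      have hy' : IsUnit (y' 0) ∨ IsUnit (y' 1) := by
        apply nonunit_sum (a := x' 0) (b := x' 1)
        simp only [dotProduct, Fin.sum_univ_two] at hyx
        linear_combination hyx
      rcases ih ht with h | h | ⟨c, x, y, hx, hy, h⟩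
      · right; right
        exact ⟨1, x', y', hx', hy', by rw [h, mul_one, one_smul]⟩
      · right; left; rw [h, mul_zero]
      · right; right
        refine ⟨(y' ⬝ᵥ x) * c, x', y, hx', hy, ?_⟩
        rw [h, Matrix.mul_smul, _root_.vecMulVec_mul_vecMulVec, smul_smul, mul_comm]

lemma m2_prod (l : List (Matrix (Fin 2) (Fin 2) R)) (hl : ∀ e ∈ l, IsIdempotentElem e) :
    ∃ F G : Matrix (Fin 2) (Fin 2) R, IsIdempotentElem F ∧ IsIdempotentElem G ∧
      l.prod = F * G := by
  rcases m2_prod_aux l hl with h | h | ⟨c, x, y, hx, hy, h⟩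
  · exact ⟨1, 1, IsIdempotentElem.one, IsIdempotentElem.one, by rw [h, one_mul]⟩
  · exact ⟨0, 0, IsIdempotentElem.zero, IsIdempotentElem.zero, by rw [h, mul_zero]⟩
  · obtain ⟨F, G, hF, hG, hFG⟩ := two_idem_of_smul x y hx hy c
    exact ⟨F, G, hF, hG, by rw [h, hFG]⟩

variable {R : Type*} [CommRing R] [IsLocalRing R] [Finite R]

-- step 1: mod-m solution
lemma base_sol (h2 : IsUnit (2 : R)) :
    ∃ a b : R, a^2 + b^2 + 1 ∈ IsLocalRing.maximalIdeal R := by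
  classical
  let k := IsLocalRing.ResidueField R
  have hfin : Finite k := Finite.of_surjective _ (IsLocalRing.residue_surjective (R := R))
  let _ : Fintype k := Fintype.ofFinite k
  set p := ringChar k with hp
  have hprime : p.Prime := CharP.char_is_prime k p
  have : Fact p.Prime := ⟨hprime⟩
  obtain ⟨a, b, _, _, hab⟩ := Nat.sq_add_sq_zmodEq p (-1)
  have hdvd : (p : ℤ) ∣ ((a:ℤ)^2 + (b:ℤ)^2 + 1) := by
    have h := hab.dvd
    obtain ⟨s, hs⟩ := h
    exact ⟨-s, by linear_combination -hs⟩
  obtain ⟨t, ht⟩ := hdvd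
  refine ⟨(a:R), (b:R), ?_⟩
  have hcast : ((a:R))^2 + ((b:R))^2 + 1 = (p : R) * (t : R) := by
    have := congrArg (fun z : ℤ => (z : R)) ht
    push_cast at this
    linear_combination this
  rw [hcast]
  apply Ideal.mul_mem_right
  rw [← Ideal.Quotient.eq_zero_iff_mem]
  show (IsLocalRing.residue R) (p : R) = 0
  rw [map_natCast]
  exact CharP.cast_eq_zero k p

lemma newton (h2 : IsUnit (2 : R)) :
    ∃ a b : R, a^2 + b^2 = -1 := by
  obtain ⟨a0, b0, hab0⟩ := base_sol (R := R) h2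
  set m := IsLocalRing.maximalIdeal R with hm
  -- one of a0 b0 is a unit
  have hbase : ∃ a b : R, IsUnit a ∧ a^2 + b^2 + 1 ∈ m^1 := by
    by_cases ha : IsUnit a0
    · exact ⟨a0, b0, ha, by simpa using hab0⟩
    · by_cases hb : IsUnit b0
      · exact ⟨b0, a0, hb, by rw [pow_one]; convert hab0 using 2; ring⟩
      · exfalso
        have hsq : a0^2 + b0^2 ∈ m := by
          apply Ideal.add_mem
          · exact Ideal.pow_mem_of_mem m ((IsLocalRing.mem_maximalIdeal _).mpr ha) 2 (by norm_num)
          · exact Ideal.pow_mem_of_mem m ((IsLocalRing.mem_maximalIdeal _).mpr hb) 2 (by norm_num)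
        have h1 : (1 : R) ∈ m := by
          have := Ideal.sub_mem m hab0 hsq
          simpa using this
        exact (IsLocalRing.maximalIdeal.isMaximal R).ne_top (Ideal.eq_top_of_isUnit_mem _ h1 isUnit_one)
  -- Newton iteration
  have hstep : ∀ n : ℕ, (∃ a b : R, IsUnit a ∧ a^2 + b^2 + 1 ∈ m^(n+1)) →
      ∃ a b : R, IsUnit a ∧ a^2 + b^2 + 1 ∈ m^(n+2) := by
    rintro n ⟨a, b, ha, hmem⟩
    have h2a : IsUnit (2 * a) := h2.mul ha
    obtain ⟨u, hu⟩ := h2a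
    set ε := a^2 + b^2 + 1 with hε
    refine ⟨a - ε * ↑u⁻¹, b, ?_, ?_⟩
    · by_contra hns
      have hεm : ε * ↑u⁻¹ ∈ m := by
        apply Ideal.mul_mem_right
        exact Ideal.pow_le_self (Nat.succ_ne_zero n) hmem
      have : a ∈ m := by
        have := Ideal.add_mem m ((IsLocalRing.mem_maximalIdeal _).mpr hns) hεm
        simpa using this
      exact mem_nonunits_iff.mp ((IsLocalRing.mem_maximalIdeal a).mp this) ha
    · have key : (a - ε*↑u⁻¹)^2 + b^2 + 1 = ε^2 * (↑u⁻¹:R)^2 := by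
        linear_combination (-ε) * u.mul_inv + ε * (↑u⁻¹:R) * hu
      rw [key]
      apply Ideal.mul_mem_right
      have h1 : ε^2 ∈ (m^(n+1))^2 := Ideal.pow_mem_pow hmem 2
      rw [← pow_mul] at h1
      exact Ideal.pow_le_pow_right (by omega) h1
  have hiter : ∀ n : ℕ, ∃ a b : R, IsUnit a ∧ a^2 + b^2 + 1 ∈ m^(n+1) := by
    intro n
    induction n with
    | zero => exact hbase
    | succ k ih => exact hstep k ih
  have hart : IsArtinianRing R := isArtinian_of_finite
  have hnil : IsNilpotent m := by
    rw [hm, ← IsLocalRing.jacobson_eq_maximalIdeal (⊥ : Ideal R) bot_ne_top]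
    exact IsArtinianRing.isNilpotent_jacobson_bot
  obtain ⟨N, hN⟩ := hnil
  obtain ⟨a, b, ha, hmem⟩ := hiter N
  have : a^2 + b^2 + 1 ∈ (⊥ : Ideal R) := by
    have hb' : m ^ (N+1) ≤ m ^ N := Ideal.pow_le_pow_right (by omega)
    have := hb' hmem
    rwa [hN] at this
  have h0 : a^2 + b^2 + 1 = 0 := Ideal.mem_bot.mp this
  exact ⟨a, b, by linear_combination h0⟩


-- the quaternionic basis of M₂(R) given a solution of a²+b²=-1
noncomputable def quatBasis (a b : R) (hab : a^2 + b^2 = -1) :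
    QuaternionAlgebra.Basis (R := R) (Matrix (Fin 2) (Fin 2) R) (-1) 0 (-1) where
  i := !![a, b; b, -a]
  j := !![0, 1; -1, 0]
  k := !![-b, a; a, b]
  i_mul_i := by
    ext i j
    fin_cases i <;> fin_cases j <;>
      simp [Matrix.mul_apply, Fin.sum_univ_two, Matrix.smul_apply, Matrix.one_apply] <;>
      first | ring1 | linear_combination -hab | linear_combination -2*hab | linear_combination hab | linear_combination 2*hab
  j_mul_j := by
    ext i j
    fin_cases i <;> fin_cases j <;>
      simp [Matrix.mul_apply, Fin.sum_univ_two, Matrix.smul_apply, Matrix.one_apply]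
  i_mul_j := by
    ext i j
    fin_cases i <;> fin_cases j <;>
      simp [Matrix.mul_apply, Fin.sum_univ_two]
  j_mul_i := by
    ext i j
    fin_cases i <;> fin_cases j <;>
      simp [Matrix.mul_apply, Fin.sum_univ_two]

noncomputable def quatHom (a b : R) (hab : a^2 + b^2 = -1) :
    ℍ[R,-1,-1] →ₐ[R] Matrix (Fin 2) (Fin 2) R :=
  (quatBasis a b hab).liftHom

lemma quatHom_surj (a b : R) (hab : a^2 + b^2 = -1) (h2 : IsUnit (2:R)) :
    Function.Surjective (quatHom a b hab) := by
  intro M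
  obtain ⟨t, ht⟩ : ∃ t : R, 2 * t = 1 := by
    obtain ⟨u, hu⟩ := h2
    exact ⟨↑u⁻¹, by rw [← hu]; exact u.mul_inv⟩
  obtain ⟨p, q, r, s, rfl⟩ : ∃ p q r s, M = !![p,q;r,s] := ⟨_,_,_,_, Matrix.eta_fin_two M⟩
  refine ⟨⟨t*(p+s), -(a*(t*(p-s)) + b*(t*(q+r))), t*(q-r), b*(t*(p-s)) - a*(t*(q+r))⟩, ?_⟩
  show (quatBasis a b hab).lift _ = _
  unfold QuaternionAlgebra.Basis.lift quatBasis
  ext i j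
  fin_cases i <;> fin_cases j <;>
    simp [Matrix.add_apply, Matrix.smul_apply, Matrix.algebraMap_matrix_apply,
      Matrix.one_apply, Matrix.mul_apply, Fin.sum_univ_two]
  · linear_combination (-(t*(p-s)))*hab + p*ht
  · linear_combination (-(t*(q+r)))*hab + q*ht
  · linear_combination (-(t*(q+r)))*hab + r*ht
  · linear_combination (t*(p-s))*hab + s*ht

lemma quatHom_bij (a b : R) (hab : a^2 + b^2 = -1) (h2 : IsUnit (2:R)) :
    Function.Bijective (quatHom a b hab) := by
  have e : ℍ[R,-1,-1] ≃ Matrix (Fin 2) (Fin 2) R :=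
    (QuaternionAlgebra.equivTuple (-1) 0 (-1)).trans
      (((finProdFinEquiv (m := 2) (n := 2)).symm.arrowCongr (Equiv.refl R)).trans
        ((Equiv.curry _ _ _).trans (Matrix.of (m := Fin 2) (n := Fin 2) (α := R))))
  have : Finite ℍ[R,-1,-1] := Finite.of_equiv _ e.symm
  exact ⟨(Finite.injective_iff_surjective_of_equiv e).mpr (quatHom_surj a b hab h2),
    quatHom_surj a b hab h2⟩

noncomputable def quatEquiv (a b : R) (hab : a^2 + b^2 = -1) (h2 : IsUnit (2:R)) :
    ℍ[R,-1,-1] ≃+* Matrix (Fin 2) (Fin 2) R :=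
  RingEquiv.ofBijective (quatHom a b hab).toRingHom (quatHom_bij a b hab h2)

lemma quat_idem_char2 (h2 : ¬IsUnit (2:R)) {e : ℍ[R]} (he : IsIdempotentElem e) :
    e = 0 ∨ e = 1 := by
  have hee : e * e = e := he
  have hre := congrArg QuaternionAlgebra.re hee
  have hi := congrArg QuaternionAlgebra.imI hee
  have hj := congrArg QuaternionAlgebra.imJ hee
  have hk := congrArg QuaternionAlgebra.imK hee
  simp only [Quaternion.re_mul, Quaternion.imI_mul, Quaternion.imJ_mul, Quaternion.imK_mul] at hre hi hj hk
  have hu : IsUnit (1 - 2 * e.re) := by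
    apply IsLocalRing.isUnit_one_sub_self_of_mem_nonunits
    intro hun
    exact h2 (isUnit_of_mul_isUnit_left hun)
  have hb : e.imI = 0 := hu.mul_left_cancel
    (show (1-2*e.re)*e.imI = (1-2*e.re)*0 by linear_combination -hi)
  have hc : e.imJ = 0 := hu.mul_left_cancel
    (show (1-2*e.re)*e.imJ = (1-2*e.re)*0 by linear_combination -hj)
  have hd : e.imK = 0 := hu.mul_left_cancel
    (show (1-2*e.re)*e.imK = (1-2*e.re)*0 by linear_combination -hk)
  have ha : IsIdempotentElem e.re := by
    show e.re * e.re = e.re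
    linear_combination hre + e.imI*hb + e.imJ*hc + e.imK*hd
  rcases local_idem ha with h | h
  · left; ext <;> simp [h, hb, hc, hd]
  · right; ext <;> simp [h, hb, hc, hd]

lemma prod_zero_one {M : Type*} [MonoidWithZero M] (l : List M) (h : ∀ e ∈ l, e = 0 ∨ e = 1) :
    l.prod = 0 ∨ l.prod = 1 := by
  induction l with
  | nil => right; rfl
  | cons e t ih =>
    rw [List.prod_cons]
    rcases h e (List.mem_cons_self (a := e) (l := t)) with rfl | rfl
    · left; rw [zero_mul]
    · rw [one_mul]; exact ih (fun f hf => h f (List.mem_cons_of_mem _ hf))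
end Aux


/-- Over a finite commutative local principal ring `R`, an element of the quaternion ring
`H(R)` is a product of `r ≥ 1` idempotents iff it is a product of two idempotents. -/
theorem quaternion_prod_idempotents_iff_two (R : Type*) [CommRing R] [Finite R]
    [IsLocalRing R] [IsPrincipalIdealRing R] (x : ℍ[R]) :
    (∃ l : List ℍ[R], l ≠ [] ∧ (∀ e ∈ l, IsIdempotentElem e) ∧ x = l.prod) ↔
      (∃ e₁ e₂ : ℍ[R], IsIdempotentElem e₁ ∧ IsIdempotentElem e₂ ∧ x = e₁ * e₂) := by
  constructor
  · rintro ⟨l, -, hl, rfl⟩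
    by_cases h2 : IsUnit (2:R)
    · obtain ⟨a, b, hab⟩ := newton h2
      set ψ := quatEquiv a b hab h2 with hψ
      have hmap : ∀ e ∈ l.map (fun q => ψ q), IsIdempotentElem e := by
        intro f hf
        obtain ⟨q, hq, rfl⟩ := List.mem_map.mp hf
        have hq' := hl q hq
        show ψ q * ψ q = ψ q
        rw [← _root_.map_mul]; exact congrArg ψ hq'.eq
      obtain ⟨F, G, hF, hG, hFG⟩ := m2_prod _ hmap
      refine ⟨ψ.symm F, ψ.symm G, ?_, ?_, ?_⟩
      · show ψ.symm F * ψ.symm F = ψ.symm F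
        rw [← _root_.map_mul, hF.eq]
      · show ψ.symm G * ψ.symm G = ψ.symm G
        rw [← _root_.map_mul, hG.eq]
      · have hp : ψ l.prod = F * G := by
          rw [← hFG]
          exact map_list_prod ψ l
        exact ((ψ.symm_apply_apply _).symm.trans (by rw [hp])).trans (_root_.map_mul ψ.symm F G)
    · have h01 : ∀ e ∈ l, e = 0 ∨ e = 1 := fun e hee => quat_idem_char2 h2 (hl e hee)
      rcases prod_zero_one l h01 with h | h
      · exact ⟨0, 0, IsIdempotentElem.zero, IsIdempotentElem.zero, by rw [h, mul_zero]⟩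
      · exact ⟨1, 1, IsIdempotentElem.one, IsIdempotentElem.one, by rw [h, one_mul]⟩
  · rintro ⟨e₁, e₂, h1, h2, rfl⟩
    refine ⟨[e₁, e₂], by simp, ?_, by simp⟩
    intro e he
    simp only [List.mem_cons, List.mem_singleton, List.not_mem_nil, or_false] at he
    rcases he with rfl | rfl <;> assumption
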